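/- (Lagrange–Jacobi identity) Along any solution of the Newtonian N-body problem on an interval J, the moment of inertia I(t) = (1/2) Σ_j m_j ‖r_j(t)‖² is twice differentiable and satisfies Ï(t) = 2 T(t) − U(t) for all t ∈ J. -/

import Mathlib

open Finset

local notation "⟪" x ", " y "⟫" => @inner ℝ _ _ x y

/-- Pairing a double sum over distinct indices into a sum over ordered pairs. -/
lemma sum_erase_pair_aux {N : ℕ} (f : Fin N → Fin N → ℝ) :
    ∑ j, ∑ k ∈ Finset.univ.erase j, f j k
      = ∑ j, ∑ k ∈ Finset.univ.filter (fun k => j < k), (f j k + f k j) := by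
  classical
  have hsplit : ∀ j : Fin N, ∑ k ∈ Finset.univ.erase j, f j k
      = (∑ k ∈ Finset.univ.filter (fun k => j < k), f j k)
        + ∑ k ∈ Finset.univ.filter (fun k => k < j), f j k := by
    intro j
    rw [← Finset.sum_filter_add_sum_filter_not (Finset.univ.erase j) (fun k => j < k)]
    congr 1
    · apply Finset.sum_congr _ (fun _ _ => rfl)
      ext k
      simp only [Finset.mem_filter, Finset.mem_erase, Finset.mem_univ, true_and, and_true]
      constructor
      · rintro ⟨_, h⟩; exact h
      · intro h; exact ⟨h.ne', h⟩
    · apply Finset.sum_congr _ (fun _ _ => rfl)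
      ext k
      simp only [Finset.mem_filter, Finset.mem_erase, Finset.mem_univ, true_and, and_true,
        not_lt]
      constructor
      · rintro ⟨hne, hle⟩; exact lt_of_le_of_ne hle hne
      · intro h; exact ⟨h.ne, h.le⟩
  simp only [hsplit, Finset.sum_add_distrib]
  congr 1
  exact Finset.sum_comm' (by intro x y; simp)

/-- **Lagrange–Jacobi identity.** Along any solution of the Newtonian N-body
problem on an interval `J`, the moment of inertia
`I(t) = (1/2) ∑ j, m j ‖r j t‖²` is twice differentiable and satisfies
`Ï(t) = 2 T(t) - U(t)` for all `t ∈ J`. -/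
theorem lagrange_jacobi_identity (N : ℕ) (m : Fin N → ℝ) (hm : ∀ j, 0 < m j)
    (G : ℝ) (hG : 0 < G) (J : Set ℝ) (hJ : Convex ℝ J)
    (r v a : Fin N → ℝ → EuclideanSpace ℝ (Fin 3))
    (hrv : ∀ j, ∀ t ∈ J, HasDerivWithinAt (r j) (v j t) J t)
    (hva : ∀ j, ∀ t ∈ J, HasDerivWithinAt (v j) (a j t) J t)
    (hacont : ∀ j, ContinuousOn (a j) J)
    (hsep : ∀ t ∈ J, ∀ j k, j ≠ k → r j t ≠ r k t)
    (hNewton : ∀ j, ∀ t ∈ J,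
      m j • a j t = ∑ k ∈ Finset.univ.erase j,
        (G * m j * m k / ‖r k t - r j t‖ ^ 3) • (r k t - r j t))
    (T U I : ℝ → ℝ)
    (hT : ∀ t, T t = (1 / 2) * ∑ j, m j * ‖v j t‖ ^ 2)
    (hU : ∀ t, U t = ∑ j, ∑ k ∈ Finset.univ.filter (fun k => j < k),
        G * m j * m k / ‖r j t - r k t‖)
    (hI : ∀ t, I t = (1 / 2) * ∑ j, m j * ‖r j t‖ ^ 2) :
    ∃ I' : ℝ → ℝ, (∀ t ∈ J, HasDerivWithinAt I (I' t) J t) ∧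
      (∀ t ∈ J, HasDerivWithinAt I' (2 * T t - U t) J t) := by
  classical
  refine ⟨fun t => ∑ j, m j * ⟪r j t, v j t⟫, ?_, ?_⟩
  · intro t ht
    have hIfun : I = fun t => (1 / 2 : ℝ) * ∑ j, m j * ⟪r j t, r j t⟫ := by
      funext t
      rw [hI]
      congr 1
      exact Finset.sum_congr rfl fun j _ => by
        rw [real_inner_self_eq_norm_sq]
    rw [hIfun]
    have h1 : HasDerivWithinAt (fun t => (1 / 2 : ℝ) * ∑ j, m j * ⟪r j t, r j t⟫)
        ((1 / 2) * ∑ j, m j * (⟪r j t, v j t⟫ + ⟪v j t, r j t⟫)) J t :=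
      (HasDerivWithinAt.fun_sum fun j _ =>
        (((hrv j t ht).inner ℝ (hrv j t ht))).const_mul (m j)).const_mul _
    convert h1 using 1
    rw [Finset.mul_sum]
    refine Finset.sum_congr rfl fun j _ => ?_
    rw [real_inner_comm (v j t) (r j t)]
    ring
  · intro t ht
    have h1 : HasDerivWithinAt (fun t => ∑ j, m j * ⟪r j t, v j t⟫)
        (∑ j, m j * (⟪r j t, a j t⟫ + ⟪v j t, v j t⟫)) J t :=
      HasDerivWithinAt.fun_sum fun j _ =>
        (((hrv j t ht).inner ℝ (hva j t ht))).const_mul (m j)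
    convert h1 using 1
    -- kinetic part
    have hkin : ∑ j, m j * ⟪v j t, v j t⟫ = 2 * T t := by
      rw [hT, show (2 : ℝ) * (1 / 2 * ∑ j, m j * ‖v j t‖ ^ 2)
          = ∑ j, m j * ‖v j t‖ ^ 2 by ring]
      exact Finset.sum_congr rfl fun j _ => by rw [real_inner_self_eq_norm_sq]
    -- potential part
    have hpot : ∑ j, m j * ⟪r j t, a j t⟫ = -U t := by
      have hstep : ∀ j, m j * ⟪r j t, a j t⟫
          = ∑ k ∈ Finset.univ.erase j,
              (G * m j * m k / ‖r k t - r j t‖ ^ 3) * ⟪r j t, r k t - r j t⟫ := by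
        intro j
        have : m j * ⟪r j t, a j t⟫ = ⟪r j t, m j • a j t⟫ := by
          rw [real_inner_smul_right]
        rw [this, hNewton j t ht, inner_sum]
        exact Finset.sum_congr rfl fun k _ => by rw [real_inner_smul_right]
      simp only [hstep]
      rw [sum_erase_pair_aux (fun j k =>
        (G * m j * m k / ‖r k t - r j t‖ ^ 3) * ⟪r j t, r k t - r j t⟫), hU,
        ← Finset.sum_neg_distrib]
      refine Finset.sum_congr rfl fun j _ => ?_
      rw [← Finset.sum_neg_distrib]
      refine Finset.sum_congr rfl fun k hk => ?_
      have hjk : j < k := (Finset.mem_filter.mp hk).2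
      have hne : r j t ≠ r k t := hsep t ht j k hjk.ne
      have hd : ‖r j t - r k t‖ ≠ 0 := by
        simpa [sub_eq_zero] using hne
      have hrev : ‖r k t - r j t‖ = ‖r j t - r k t‖ := norm_sub_rev _ _
      have hinner : ⟪r j t, r k t - r j t⟫ + ⟪r k t, r j t - r k t⟫
          = -‖r j t - r k t‖ ^ 2 := by
        simp only [← real_inner_self_eq_norm_sq, inner_sub_left, inner_sub_right,
          real_inner_comm (r k t) (r j t)]
        ring
      rw [norm_sub_rev (r k t) (r j t)]
      rw [show G * m j * m k / ‖r j t - r k t‖ ^ 3 * ⟪r j t, r k t - r j t⟫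
            + G * m k * m j / ‖r j t - r k t‖ ^ 3 * ⟪r k t, r j t - r k t⟫
          = G * m j * m k / ‖r j t - r k t‖ ^ 3
            * (⟪r j t, r k t - r j t⟫ + ⟪r k t, r j t - r k t⟫) by ring, hinner]
      field_simp
    have hsplitsum : ∑ j, m j * (⟪r j t, a j t⟫ + ⟪v j t, v j t⟫)
        = (∑ j, m j * ⟪r j t, a j t⟫) + ∑ j, m j * ⟪v j t, v j t⟫ := by
      rw [← Finset.sum_add_distrib]
      exact Finset.sum_congr rfl fun j _ => by ring
    rw [hsplitsum, hpot, hkin]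
    ring
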